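/- For every Dyck path γ of semilength n, the number of Dyck paths of semilength n that cover γ in the Dyck lattice D_n equals the number of occurrences of the factor DU in γ (valleys), and the number of Dyck paths of semilength n covered by γ equals the number of occurrences of the factor UD in γ whose starting height is at least 1 (peaks not on the x-axis). -/

import Mathlib

/-- Steps of a (Grand) Dyck path: up `U = (1,1)` and down `D = (1,-1)`. -/
inductive Step : Type
  | U : Step
  | D : Step
  deriving DecidableEq

/-- The height of a path: number of up steps minus number of down steps. -/
def height (w : List Step) : ℤ := (w.count Step.U : ℤ) - (w.count Step.D : ℤ)

/-- A Dyck path of semilength `n`: a word of length `2n` with `n` up steps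
(hence `n` down steps) all of whose prefixes have nonnegative height. -/
def IsDyck (n : ℕ) (w : List Step) : Prop :=
  w.length = 2 * n ∧ w.count Step.U = n ∧ ∀ i : ℕ, 0 ≤ height (w.take i)

/-- A Grand Dyck path of semilength `n`: a word of length `2n` with `n` up steps. -/
def IsGrandDyck (n : ℕ) (w : List Step) : Prop :=
  w.length = 2 * n ∧ w.count Step.U = n

/-- The order on paths: pointwise comparison of the heights after each number of steps. -/
def PathLe (w w' : List Step) : Prop :=
  ∀ i : ℕ, height (w.take i) ≤ height (w'.take i)

/-- Strict order on paths. -/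
def PathLt (w w' : List Step) : Prop := PathLe w w' ∧ ¬ PathLe w' w

/-- `Covers P w w'` : within the class of paths satisfying `P`, the path `w'` covers `w`,
i.e. `w < w'` and no path of the class lies strictly between them. -/
def Covers (P : List Step → Prop) (w w' : List Step) : Prop :=
  P w ∧ P w' ∧ PathLt w w' ∧ ∀ z : List Step, P z → ¬ (PathLt w z ∧ PathLt z w')

/-- Number of occurrences of the factor `xy` in the word `w`. -/
def countFactor (x y : Step) (w : List Step) : ℕ :=
  ((Finset.range w.length).filter
    (fun i => w[i]? = some x ∧ w[i + 1]? = some y)).card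

/-- Number of occurrences of the factor `xy` in the word `w` whose starting height
(the height after the first `i` steps, the factor occupying positions `i` and `i+1`,
`0`-indexed) is at least `1`. -/
def countFactorHigh (x y : Step) (w : List Step) : ℕ :=
  ((Finset.range w.length).filter
    (fun i => w[i]? = some x ∧ w[i + 1]? = some y ∧ 1 ≤ height (w.take i))).card

namespace DyckAux

def eps : Step → ℤ | .U => 1 | .D => -1

def H (w : List Step) (i : ℕ) : ℤ := height (w.take i)

lemma height_nil : height ([] : List Step) = 0 := rfl

lemma height_cons (s : Step) (w : List Step) : height (s :: w) = eps s + height w := by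
  cases s <;> simp [height, eps, List.count_cons] <;> push_cast <;> ring

lemma height_append (a b : List Step) : height (a ++ b) = height a + height b := by
  simp [height, List.count_append]; push_cast; ring

lemma H_zero (w : List Step) : H w 0 = 0 := by simp [H, height]

lemma H_succ (w : List Step) (i : ℕ) :
    H w (i+1) = H w i + height ((w[i]?).toList) := by
  rw [H, H, List.take_succ, height_append]

lemma H_succ_get {w : List Step} {i : ℕ} {s : Step} (h : w[i]? = some s) :
    H w (i+1) = H w i + eps s := by
  rw [H_succ, h]; cases s <;> simp [height, eps]

lemma H_succ_none {w : List Step} {i : ℕ} (h : w[i]? = none) :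
    H w (i+1) = H w i := by
  rw [H_succ, h]; simp [height]

lemma H_stable {w : List Step} {i : ℕ} (h : w.length ≤ i) : H w i = height w := by
  rw [H, List.take_of_length_le h]

lemma ext_of_H {w w' : List Step} (hl : w.length = w'.length)
    (h : ∀ i, H w i = H w' i) : w = w' := by
  apply List.ext_getElem?
  intro i
  by_cases hi : i < w.length
  · rcases hs : w[i]? with _ | s
    · exact absurd (List.getElem?_eq_none_iff.1 hs) (not_le.2 hi)
    rcases hs' : w'[i]? with _ | s'
    · exact absurd (List.getElem?_eq_none_iff.1 hs') (not_le.2 (hl ▸ hi))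
    have e1 := H_succ_get hs
    have e2 := H_succ_get hs'
    have : eps s = eps s' := by have := h i; have := h (i+1); linarith
    cases s <;> cases s' <;> simp_all [eps]
  · rw [List.getElem?_eq_none_iff.2 (le_of_not_gt hi), List.getElem?_eq_none_iff.2 (hl ▸ le_of_not_gt hi)]

lemma H_le_add (w : List Step) (a t : ℕ) : H w (a + t) ≤ H w a + t := by
  induction t with
  | zero => simp
  | succ t ih =>
    have : H w (a + t + 1) ≤ H w (a + t) + 1 := by
      rcases h : w[a+t]? with _ | s
      · rw [H_succ_none h]; linarith
      · rw [H_succ_get h]; cases s <;> simp [eps]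
    push_cast
    have : H w (a + (t+1)) ≤ H w (a+t) + 1 := by rwa [← add_assoc]
    push_cast at ih ⊢
    linarith

lemma H_ge_sub (w : List Step) (a t : ℕ) : H w a - t ≤ H w (a + t) := by
  induction t with
  | zero => simp
  | succ t ih =>
    have : H w (a + t) - 1 ≤ H w (a + t + 1) := by
      rcases h : w[a+t]? with _ | s
      · rw [H_succ_none h]; linarith
      · rw [H_succ_get h]; cases s <;> simp [eps] <;> linarith
    have e : a + (t+1) = a + t + 1 := by ring
    rw [e]; push_cast at ih ⊢; linarith


/-- replace the two letters at positions `i`, `i+1` by `a`, `b`. -/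
def swp (w : List Step) (i : ℕ) (a b : Step) : List Step :=
  w.take i ++ a :: b :: w.drop (i+2)

lemma lt_len {w : List Step} {i : ℕ} {s : Step} (h : w[i]? = some s) : i < w.length := by
  rcases List.getElem?_eq_some_iff.1 h with ⟨h', _⟩; exact h'

section swap
variable {w : List Step} {i : ℕ} {x y : Step}
  (hx : w[i]? = some x) (hy : w[i+1]? = some y)

include hx hy

lemma decomp : w = w.take i ++ x :: y :: w.drop (i+2) := by
  have hi : i < w.length := lt_len hx
  have hi1 : i + 1 < w.length := lt_len hy
  have h1 : w.drop i = x :: w.drop (i+1) := by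
    rw [List.drop_eq_getElem_cons hi]
    congr 1
    have := hx
    rw [List.getElem?_eq_getElem hi] at this
    exact (Option.some_inj.1 this)
  have h2 : w.drop (i+1) = y :: w.drop (i+2) := by
    rw [List.drop_eq_getElem_cons hi1]
    congr 1
    have := hy
    rw [List.getElem?_eq_getElem hi1] at this
    exact (Option.some_inj.1 this)
  conv_lhs => rw [← List.take_append_drop i w, h1, h2]

lemma length_swp (a b : Step) : (swp w i a b).length = w.length := by
  conv_rhs => rw [decomp hx hy]
  simp [swp]

lemma H_swp_le (a b : Step) {k : ℕ} (hk : k ≤ i) : H (swp w i a b) k = H w k := by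
  have hi : i < w.length := lt_len hx
  unfold H swp
  rw [List.take_append_of_le_length (by simp [List.length_take]; omega), List.take_take,
    min_eq_left hk]

lemma H_swp_mid (a b : Step) : H (swp w i a b) (i+1) = H w i + eps a := by
  have hi : i < w.length := lt_len hx
  have hlen : (w.take i).length = i := by simp [List.length_take]; omega
  unfold H swp
  rw [List.take_append, hlen, List.take_of_length_le (by omega),
    height_append]
  congr 1
  have : i + 1 - i = 1 := by omega
  rw [this]
  simp [List.take_succ_cons, height_cons, height_nil]

lemma H_swp_ge (a b : Step) {k : ℕ} (hk : i + 2 ≤ k) :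
    H (swp w i a b) k = H w k + (eps a + eps b) - (eps x + eps y) := by
  have hi : i < w.length := lt_len hx
  have hlen : (w.take i).length = i := by simp [List.length_take]; omega
  have hw : w = w.take i ++ x :: y :: w.drop (i+2) := decomp hx hy
  have hk2 : ∀ (c d : Step), (c :: d :: w.drop (i+2)).take (k - i)
      = c :: d :: (w.drop (i+2)).take (k - i - 2) := by
    intro c d
    obtain ⟨m, hm⟩ : ∃ m, k - i = m + 2 := ⟨k - i - 2, by omega⟩
    rw [hm, List.take_succ_cons, List.take_succ_cons]
    norm_num
  unfold H swp
  conv_rhs => rw [hw]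
  rw [List.take_append, List.take_append, hlen,
    List.take_of_length_le (by rw [hlen]; omega : (w.take i).length ≤ k),
    hk2, hk2, height_append, height_append]
  simp [height_cons]
  ring

end swap

lemma count_add (w : List Step) : w.count Step.U + w.count Step.D = w.length := by
  induction w with
  | nil => rfl
  | cons s t ih => cases s <;> simp [List.count_cons] <;> omega

lemma height_eq_zero {n : ℕ} {w : List Step} (hw : IsDyck n w) : height w = 0 := by
  have h1 := count_add w
  rw [hw.1, hw.2.1] at h1
  have : w.count Step.D = n := by omega
  rw [height, hw.2.1, this]; ring

lemma H_final {n : ℕ} {w : List Step} (hw : IsDyck n w) {k : ℕ} (hk : 2 * n ≤ k) :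
    H w k = 0 := by
  rw [H_stable (hw.1 ▸ hk), height_eq_zero hw]

lemma H_nonneg {n : ℕ} {w : List Step} (hw : IsDyck n w) (k : ℕ) : 0 ≤ H w k := hw.2.2 k

section raise
variable {n : ℕ} {γ : List Step} {i : ℕ}
  (hx : γ[i]? = some Step.D) (hy : γ[i+1]? = some Step.U)

include hx hy

lemma H_raise_ne {k : ℕ} (hk : k ≠ i + 1) : H (swp γ i .U .D) k = H γ k := by
  rcases le_or_gt k i with h | h
  · exact H_swp_le hx hy _ _ h
  · rw [H_swp_ge hx hy _ _ (by omega)]; simp [eps]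

lemma H_raise : H (swp γ i .U .D) (i+1) = H γ (i+1) + 2 := by
  rw [H_swp_mid hx hy, H_succ_get hx]; simp [eps]; ring

lemma isDyck_raise (hγ : IsDyck n γ) : IsDyck n (swp γ i .U .D) := by
  refine ⟨(length_swp hx hy _ _).trans hγ.1, ?_, ?_⟩
  · have : γ.count Step.U = n := hγ.2.1
    rw [decomp hx hy] at this
    rw [swp]
    simpa [List.count_append, List.count_cons] using this
  · intro k
    show 0 ≤ H (swp γ i .U .D) k
    by_cases hk : k = i + 1
    · subst hk; rw [H_raise hx hy]
      have := H_nonneg hγ (i+1); linarith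
    · rw [H_raise_ne hx hy hk]; exact H_nonneg hγ k

end raise

section lower
variable {n : ℕ} {γ : List Step} {i : ℕ}
  (hx : γ[i]? = some Step.U) (hy : γ[i+1]? = some Step.D)

include hx hy

lemma H_lower_ne {k : ℕ} (hk : k ≠ i + 1) : H (swp γ i .D .U) k = H γ k := by
  rcases le_or_gt k i with h | h
  · exact H_swp_le hx hy _ _ h
  · rw [H_swp_ge hx hy _ _ (by omega)]; simp [eps]

lemma H_lower : H (swp γ i .D .U) (i+1) = H γ (i+1) - 2 := by
  rw [H_swp_mid hx hy, H_succ_get hx]; simp [eps]; ring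

lemma isDyck_lower (hγ : IsDyck n γ) (hh : 1 ≤ H γ i) : IsDyck n (swp γ i .D .U) := by
  refine ⟨(length_swp hx hy _ _).trans hγ.1, ?_, ?_⟩
  · have : γ.count Step.U = n := hγ.2.1
    rw [decomp hx hy] at this
    rw [swp]
    simpa [List.count_append, List.count_cons] using this
  · intro k
    show 0 ≤ H (swp γ i .D .U) k
    by_cases hk : k = i + 1
    · subst hk; rw [H_lower hx hy, H_succ_get hx]
      simp [eps]; linarith
    · rw [H_lower_ne hx hy hk]; exact H_nonneg hγ k

end lower

lemma pathLe_iff {w w' : List Step} : PathLe w w' ↔ ∀ k, H w k ≤ H w' k := Iff.rfl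

lemma not_pathLe_iff {w w' : List Step} : ¬ PathLe w w' ↔ ∃ k, H w' k < H w k := by
  rw [pathLe_iff]; push_neg; rfl

section covA
variable {n : ℕ} {γ : List Step} {i : ℕ}

/-- raising at a valley gives a covering element -/
lemma covers_raise (hγ : IsDyck n γ)
    (hx : γ[i]? = some Step.D) (hy : γ[i+1]? = some Step.U) :
    Covers (IsDyck n) γ (swp γ i .U .D) := by
  refine ⟨hγ, isDyck_raise hx hy hγ, ⟨?_, ?_⟩, ?_⟩
  · intro k
    show H γ k ≤ H (swp γ i .U .D) k
    by_cases hk : k = i+1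
    · subst hk; rw [H_raise hx hy]; linarith
    · rw [H_raise_ne hx hy hk]
  · rw [not_pathLe_iff]
    exact ⟨i+1, by rw [H_raise hx hy]; linarith⟩
  · rintro z hz ⟨⟨h1, h1'⟩, h2, h2'⟩
    have hzγ : ∀ k, H γ k ≤ H z k := h1
    have hzr : ∀ k, H z k ≤ H (swp γ i .U .D) k := h2
    have hilen : i + 1 < γ.length := lt_len hy
    have hlen : i < z.length := by rw [hz.1, ← hγ.1]; omega
    have heq : ∀ k, k ≠ i+1 → H z k = H γ k := by
      intro k hk
      have := hzr k
      rw [H_raise_ne hx hy hk] at this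
      exact le_antisymm this (hzγ k)
    rcases hs : z[i]? with _ | s
    · exact absurd (List.getElem?_eq_none_iff.1 hs) (by omega)
    have hzi : H z i = H γ i := heq i (by omega)
    have hstep := H_succ_get hs
    have hγstep := H_succ_get hx
    cases s
    · apply h2'
      intro k
      show H (swp γ i .U .D) k ≤ H z k
      by_cases hk : k = i+1
      · subst hk
        rw [H_raise hx hy, hstep, hzi]
        simp [eps] at hγstep ⊢
        linarith
      · rw [H_raise_ne hx hy hk, heq k hk]
    · apply h1'
      intro k
      show H z k ≤ H γ k
      by_cases hk : k = i+1
      · subst hk; rw [hstep, hzi, hγstep]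
      · rw [heq k hk]

/-- lowering at a high peak gives a covered element -/
lemma covers_lower (hγ : IsDyck n γ)
    (hx : γ[i]? = some Step.U) (hy : γ[i+1]? = some Step.D)
    (hh : 1 ≤ H γ i) :
    Covers (IsDyck n) (swp γ i .D .U) γ := by
  refine ⟨isDyck_lower hx hy hγ hh, hγ, ⟨?_, ?_⟩, ?_⟩
  · intro k
    show H (swp γ i .D .U) k ≤ H γ k
    by_cases hk : k = i+1
    · subst hk; rw [H_lower hx hy]; linarith
    · rw [H_lower_ne hx hy hk]
  · rw [not_pathLe_iff]
    exact ⟨i+1, by rw [H_lower hx hy]; linarith⟩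
  · rintro z hz ⟨⟨h1, h1'⟩, h2, h2'⟩
    have hlz : ∀ k, H (swp γ i .D .U) k ≤ H z k := h1
    have hzγ : ∀ k, H z k ≤ H γ k := h2
    have hilen : i + 1 < γ.length := lt_len hy
    have hlen : i < z.length := by rw [hz.1, ← hγ.1]; omega
    have heq : ∀ k, k ≠ i+1 → H z k = H γ k := by
      intro k hk
      have := hlz k
      rw [H_lower_ne hx hy hk] at this
      exact le_antisymm (hzγ k) this
    rcases hs : z[i]? with _ | s
    · exact absurd (List.getElem?_eq_none_iff.1 hs) (by omega)
    have hzi : H z i = H γ i := heq i (by omega)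
    have hstep := H_succ_get hs
    have hγstep := H_succ_get hx
    cases s
    · apply h2'
      intro k
      show H γ k ≤ H z k
      by_cases hk : k = i+1
      · subst hk; rw [hstep, hzi, hγstep]
      · rw [heq k hk]
    · apply h1'
      intro k
      show H z k ≤ H (swp γ i .D .U) k
      by_cases hk : k = i+1
      · subst hk
        rw [H_lower hx hy, hstep, hzi]
        simp [eps] at hγstep ⊢
        linarith
      · rw [H_lower_ne hx hy hk, heq k hk]

end covA

lemma H_run {γ : List Step} {s0 : Step} {a : ℕ} :
    ∀ t, (∀ k, a ≤ k → k < a + t → γ[k]? = some s0) →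
      H γ (a + t) = H γ a + t * eps s0 := by
  intro t
  induction t with
  | zero => simp
  | succ t ih =>
    intro h
    have h1 : H γ (a+t+1) = H γ (a+t) + eps s0 :=
      H_succ_get (h (a+t) (by omega) (by omega))
    rw [show a + (t+1) = a + t + 1 from rfl, h1,
      ih (fun k hk1 hk2 => h k hk1 (by omega))]
    push_cast; ring

lemma eq_raise_of_covers {n : ℕ} {γ w : List Step} (hc : Covers (IsDyck n) γ w) :
    ∃ i, γ[i]? = some Step.D ∧ γ[i+1]? = some Step.U ∧ w = swp γ i .U .D := by
  obtain ⟨hγ, hw, ⟨hle, hnle⟩, hmin⟩ := hc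
  have hγlen : γ.length = 2*n := hγ.1
  have hwlen : w.length = 2*n := hw.1
  rw [not_pathLe_iff] at hnle
  obtain ⟨j, hj, hjmin⟩ : ∃ j, H γ j < H w j ∧ ∀ k < j, ¬ H γ k < H w k :=
    ⟨Nat.find hnle, Nat.find_spec hnle, fun k hk => Nat.find_min hnle hk⟩
  have hj0 : j ≠ 0 := by
    intro h; rw [h, H_zero, H_zero] at hj; exact lt_irrefl _ hj
  have hjlt : j < 2*n := by
    by_contra h
    rw [H_final hγ (le_of_not_gt h), H_final hw (le_of_not_gt h)] at hj
    exact lt_irrefl _ hj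
  obtain ⟨i0, rfl⟩ : ∃ i0, j = i0 + 1 := ⟨j - 1, by omega⟩
  have hprev : H γ i0 = H w i0 :=
    le_antisymm (hle _) (le_of_not_gt (hjmin _ (by omega)))
  rcases hsγ : γ[i0]? with _ | sγ
  · exact absurd (List.getElem?_eq_none_iff.1 hsγ) (by omega)
  rcases hsw : w[i0]? with _ | sw
  · exact absurd (List.getElem?_eq_none_iff.1 hsw) (by omega)
  have e1 : H γ (i0+1) = H γ i0 + eps sγ := H_succ_get hsγ
  have e2 : H w (i0+1) = H w i0 + eps sw := H_succ_get hsw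
  have hDU : sγ = Step.D ∧ sw = Step.U := by
    have h3 : eps sγ < eps sw := by rw [hprev] at e1; linarith
    cases sγ <;> cases sw <;> simp [eps] at h3 ⊢ <;> omega
  obtain ⟨rfl, rfl⟩ := hDU
  simp only [eps] at e1 e2
  have hHj : H w (i0+1) = H γ (i0+1) + 2 := by linarith
  have hex : ∃ k, i0 + 1 ≤ k ∧ γ[k]? = some Step.U := by
    by_contra hno
    push_neg at hno
    have hall : ∀ k, i0+1 ≤ k → k < (i0+1) + (2*n - (i0+1)) → γ[k]? = some Step.D := by
      intro k hk1 hk2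
      rcases hgk : γ[k]? with _ | s
      · exact absurd (List.getElem?_eq_none_iff.1 hgk) (by omega)
      cases s
      · exact absurd hgk (hno k hk1)
      · rfl
    have hrun := H_run (2*n - (i0+1)) hall
    rw [show (i0+1) + (2*n - (i0+1)) = 2*n by omega, H_final hγ le_rfl] at hrun
    have h2 := H_ge_sub w (i0+1) (2*n - (i0+1))
    rw [show (i0+1) + (2*n - (i0+1)) = 2*n by omega, H_final hw le_rfl] at h2
    simp [eps] at hrun
    linarith
  obtain ⟨m, hm, hmmin⟩ : ∃ m, (i0 + 1 ≤ m ∧ γ[m]? = some Step.U) ∧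
      ∀ k < m, ¬(i0 + 1 ≤ k ∧ γ[k]? = some Step.U) :=
    ⟨Nat.find hex, Nat.find_spec hex, fun k hk => Nat.find_min hex hk⟩
  obtain ⟨d, hd⟩ : ∃ d, m = i0 + 1 + d := ⟨m - (i0+1), by omega⟩
  have hmlt : m < 2*n := by
    have := lt_len hm.2; omega
  have hallD : ∀ k, i0 ≤ k → k < i0 + (d+1) → γ[k]? = some Step.D := by
    intro k hk1 hk2
    by_cases hkj : k = i0
    · rwa [hkj]
    rcases hgk : γ[k]? with _ | s
    · exact absurd (List.getElem?_eq_none_iff.1 hgk) (by omega)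
    cases s
    · exact absurd ⟨by omega, hgk⟩ (hmmin k (by omega))
    · rfl
  have hHm := H_run (d+1) hallD
  rw [show i0 + (d+1) = m by omega] at hHm
  have hwm := H_ge_sub w (i0+1) d
  rw [show (i0+1) + d = m by omega] at hwm
  have hkey : H γ m + 2 ≤ H w m := by
    simp [eps] at hHm
    push_cast at hHm hwm
    linarith
  obtain ⟨i, rfl⟩ : ∃ i, m = i + 1 := ⟨m - 1, by omega⟩
  have hx' : γ[i]? = some Step.D := hallD i (by omega) (by omega)
  have hy' : γ[i+1]? = some Step.U := hm.2
  have hz := isDyck_raise hx' hy' hγ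
  have hcov := covers_raise hγ hx' hy'
  have hlez : PathLe (swp γ i .U .D) w := by
    intro k
    show H (swp γ i .U .D) k ≤ H w k
    by_cases hk : k = i+1
    · subst hk; rw [H_raise hx' hy']; linarith
    · rw [H_raise_ne hx' hy' hk]; exact hle k
  have hnb := hmin _ hz
  have hwz : PathLe w (swp γ i .U .D) := by
    by_contra h
    exact hnb ⟨hcov.2.2.1, hlez, h⟩
  refine ⟨i, hx', hy', ext_of_H ?_ (fun k => le_antisymm (hwz k) (hlez k))⟩
  rw [hwlen, length_swp hx' hy', hγlen]

lemma eq_lower_of_covers {n : ℕ} {γ w : List Step} (hc : Covers (IsDyck n) w γ) :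
    ∃ i, γ[i]? = some Step.U ∧ γ[i+1]? = some Step.D ∧ 1 ≤ H γ i ∧
      w = swp γ i .D .U := by
  obtain ⟨hw, hγ, ⟨hle, hnle⟩, hmin⟩ := hc
  have hγlen : γ.length = 2*n := hγ.1
  have hwlen : w.length = 2*n := hw.1
  rw [not_pathLe_iff] at hnle
  obtain ⟨j, hj, hjmin⟩ : ∃ j, H w j < H γ j ∧ ∀ k < j, ¬ H w k < H γ k :=
    ⟨Nat.find hnle, Nat.find_spec hnle, fun k hk => Nat.find_min hnle hk⟩
  have hj0 : j ≠ 0 := by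
    intro h; rw [h, H_zero, H_zero] at hj; exact lt_irrefl _ hj
  have hjlt : j < 2*n := by
    by_contra h
    rw [H_final hγ (le_of_not_gt h), H_final hw (le_of_not_gt h)] at hj
    exact lt_irrefl _ hj
  obtain ⟨i0, rfl⟩ : ∃ i0, j = i0 + 1 := ⟨j - 1, by omega⟩
  have hprev : H w i0 = H γ i0 :=
    le_antisymm (hle _) (le_of_not_gt (hjmin _ (by omega)))
  rcases hsγ : γ[i0]? with _ | sγ
  · exact absurd (List.getElem?_eq_none_iff.1 hsγ) (by omega)
  rcases hsw : w[i0]? with _ | sw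
  · exact absurd (List.getElem?_eq_none_iff.1 hsw) (by omega)
  have e1 : H γ (i0+1) = H γ i0 + eps sγ := H_succ_get hsγ
  have e2 : H w (i0+1) = H w i0 + eps sw := H_succ_get hsw
  have hDU : sγ = Step.U ∧ sw = Step.D := by
    have h3 : eps sw < eps sγ := by rw [hprev] at e2; linarith
    cases sγ <;> cases sw <;> simp [eps] at h3 ⊢ <;> omega
  obtain ⟨rfl, rfl⟩ := hDU
  simp only [eps] at e1 e2
  have hHj : H w (i0+1) = H γ (i0+1) - 2 := by linarith
  have hex : ∃ k, i0 + 1 ≤ k ∧ γ[k]? = some Step.D := by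
    by_contra hno
    push_neg at hno
    have hall : ∀ k, i0+1 ≤ k → k < (i0+1) + (2*n - (i0+1)) → γ[k]? = some Step.U := by
      intro k hk1 hk2
      rcases hgk : γ[k]? with _ | s
      · exact absurd (List.getElem?_eq_none_iff.1 hgk) (by omega)
      cases s
      · rfl
      · exact absurd hgk (hno k hk1)
    have hrun := H_run (2*n - (i0+1)) hall
    rw [show (i0+1) + (2*n - (i0+1)) = 2*n by omega, H_final hγ le_rfl] at hrun
    have hpos : 0 ≤ H γ (i0+1) := H_nonneg hγ _
    have hc : (1:ℤ) ≤ ((2*n - (i0+1) : ℕ) : ℤ) := by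
      have : 1 ≤ 2*n - (i0+1) := by omega
      exact_mod_cast this
    simp [eps] at hrun
    linarith
  obtain ⟨m, hm, hmmin⟩ : ∃ m, (i0 + 1 ≤ m ∧ γ[m]? = some Step.D) ∧
      ∀ k < m, ¬(i0 + 1 ≤ k ∧ γ[k]? = some Step.D) :=
    ⟨Nat.find hex, Nat.find_spec hex, fun k hk => Nat.find_min hex hk⟩
  obtain ⟨d, hd⟩ : ∃ d, m = i0 + 1 + d := ⟨m - (i0+1), by omega⟩
  have hmlt : m < 2*n := by
    have := lt_len hm.2; omega
  have hallU : ∀ k, i0 ≤ k → k < i0 + (d+1) → γ[k]? = some Step.U := by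
    intro k hk1 hk2
    by_cases hkj : k = i0
    · rwa [hkj]
    rcases hgk : γ[k]? with _ | s
    · exact absurd (List.getElem?_eq_none_iff.1 hgk) (by omega)
    cases s
    · rfl
    · exact absurd ⟨by omega, hgk⟩ (hmmin k (by omega))
  have hHm := H_run (d+1) hallU
  rw [show i0 + (d+1) = m by omega] at hHm
  have hwm := H_le_add w (i0+1) d
  rw [show (i0+1) + d = m by omega] at hwm
  have hkey : H w m ≤ H γ m - 2 := by
    simp [eps] at hHm
    push_cast at hHm hwm
    linarith
  obtain ⟨i, rfl⟩ : ∃ i, m = i + 1 := ⟨m - 1, by omega⟩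
  have hx' : γ[i]? = some Step.U := hallU i (by omega) (by omega)
  have hy' : γ[i+1]? = some Step.D := hm.2
  have hhigh : 1 ≤ H γ i := by
    have h0 : 0 ≤ H w (i+1) := H_nonneg hw _
    have e3 : H γ (i+1) = H γ i + 1 := by
      rw [H_succ_get hx']; simp [eps]
    linarith
  have hz := isDyck_lower hx' hy' hγ hhigh
  have hcov := covers_lower hγ hx' hy' hhigh
  have hlez : PathLe w (swp γ i .D .U) := by
    intro k
    show H w k ≤ H (swp γ i .D .U) k
    by_cases hk : k = i+1
    · subst hk; rw [H_lower hx' hy']; linarith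
    · rw [H_lower_ne hx' hy' hk]; exact hle k
  have hnb := hmin _ hz
  have hwz : PathLe (swp γ i .D .U) w := by
    by_contra h
    exact hnb ⟨⟨hlez, h⟩, hcov.2.2.1⟩
  refine ⟨i, hx', hy', hhigh, ext_of_H ?_ (fun k => le_antisymm (hwz k) (hlez k)) |>.symm⟩
  rw [length_swp hx' hy', hγlen, hwlen]

lemma raise_inj {γ : List Step} {i i' : ℕ}
    (hx : γ[i]? = some Step.D) (hy : γ[i+1]? = some Step.U)
    (hx' : γ[i']? = some Step.D) (hy' : γ[i'+1]? = some Step.U)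
    (h : swp γ i .U .D = swp γ i' .U .D) : i = i' := by
  by_contra hne
  have h1 : H (swp γ i .U .D) (i+1) = H γ (i+1) + 2 := H_raise hx hy
  have h2 : H (swp γ i' .U .D) (i+1) = H γ (i+1) := H_raise_ne hx' hy' (by omega)
  rw [h, h2] at h1
  omega

lemma lower_inj {γ : List Step} {i i' : ℕ}
    (hx : γ[i]? = some Step.U) (hy : γ[i+1]? = some Step.D)
    (hx' : γ[i']? = some Step.U) (hy' : γ[i'+1]? = some Step.D)
    (h : swp γ i .D .U = swp γ i' .D .U) : i = i' := by
  by_contra hne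
  have h1 : H (swp γ i .D .U) (i+1) = H γ (i+1) - 2 := H_lower hx hy
  have h2 : H (swp γ i' .D .U) (i+1) = H γ (i+1) := H_lower_ne hx' hy' (by omega)
  rw [h, h2] at h1
  omega

end DyckAux

open DyckAux in
/-- In the Dyck lattice `D_n`, the number of paths covering a Dyck path `γ` equals the
number of valleys `DU` of `γ`, and the number of paths covered by `γ` equals the number
of peaks `UD` of `γ` with starting height at least `1` (peaks not on the `x`-axis). -/
theorem dyck_delta_nabla (n : ℕ) (γ : List Step) (hγ : IsDyck n γ) :
    Nat.card {w : List Step // Covers (IsDyck n) γ w} = countFactor Step.D Step.U γ ∧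
    Nat.card {w : List Step // Covers (IsDyck n) w γ} = countFactorHigh Step.U Step.D γ := by
  constructor
  · have h1 : Nat.card {w : List Step // Covers (IsDyck n) γ w}
        = Set.ncard {w : List Step | Covers (IsDyck n) γ w} := Nat.card_coe_set_eq _
    have hset : {w : List Step | Covers (IsDyck n) γ w} =
        (fun i => swp γ i .U .D) ''
          ↑((Finset.range γ.length).filter
            (fun i => γ[i]? = some Step.D ∧ γ[i + 1]? = some Step.U)) := by
      ext w
      simp only [Set.mem_setOf_eq, Set.mem_image, Finset.mem_coe, Finset.mem_filter,
        Finset.mem_range]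
      constructor
      · intro hc
        obtain ⟨i, hx, hy, rfl⟩ := eq_raise_of_covers hc
        exact ⟨i, ⟨lt_len hx, hx, hy⟩, rfl⟩
      · rintro ⟨i, ⟨hi, hx, hy⟩, rfl⟩
        exact covers_raise hγ hx hy
    rw [h1, hset, Set.ncard_image_of_injOn, Set.ncard_coe_finset]
    · rfl
    · intro i hi i' hi' h
      simp only [Finset.mem_coe, Finset.mem_filter, Finset.mem_range] at hi hi'
      exact raise_inj hi.2.1 hi.2.2 hi'.2.1 hi'.2.2 h
  · have h1 : Nat.card {w : List Step // Covers (IsDyck n) w γ}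
        = Set.ncard {w : List Step | Covers (IsDyck n) w γ} := Nat.card_coe_set_eq _
    have hset : {w : List Step | Covers (IsDyck n) w γ} =
        (fun i => swp γ i .D .U) ''
          ↑((Finset.range γ.length).filter
            (fun i => γ[i]? = some Step.U ∧ γ[i + 1]? = some Step.D
              ∧ 1 ≤ height (γ.take i))) := by
      ext w
      simp only [Set.mem_setOf_eq, Set.mem_image, Finset.mem_coe, Finset.mem_filter,
        Finset.mem_range]
      constructor
      · intro hc
        obtain ⟨i, hx, hy, hh, rfl⟩ := eq_lower_of_covers hc
        exact ⟨i, ⟨lt_len hx, hx, hy, hh⟩, rfl⟩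
      · rintro ⟨i, ⟨hi, hx, hy, hh⟩, rfl⟩
        exact covers_lower hγ hx hy hh
    rw [h1, hset, Set.ncard_image_of_injOn, Set.ncard_coe_finset]
    · rfl
    · intro i hi i' hi' h
      simp only [Finset.mem_coe, Finset.mem_filter, Finset.mem_range] at hi hi'
      exact lower_inj hi.2.1 hi.2.2.1 hi'.2.1 hi'.2.2.1 h
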